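/- For every even M_init and even O_init there exists an initial configuration with those parameters in which all robots have the same color (namely an edge-view-symmetric one) from which no deterministic algorithm achieves gathering. -/

import Mathlib

set_option autoImplicit false

/-! ### Luminous myopic robots on an anonymous ring: basic model -/

/-- A configuration of `R` luminous robots with light colors in `C`
on an anonymous ring with `N` nodes (the nodes are `ZMod N`). -/
structure Config (N R : ℕ) (C : Type) where
  pos : Fin R → ZMod N
  light : Fin R → C

namespace Gathering

variable {N R : ℕ} {C : Type}

/-- The set of light colors present at node `u`. -/
def colorsAt (cfg : Config N R C) (u : ZMod N) : Set C :=
  {c | ∃ r, cfg.pos r = u ∧ cfg.light r = c}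

/-- Node `u` hosts at least one robot. -/
def occupiedNode (cfg : Config N R C) (u : ZMod N) : Prop :=
  ∃ r, cfg.pos r = u

/-- The view from node `u` with visibility range `φ`, in orientation `dir`:
the set of colors at signed offset `k`, for `|k| ≤ φ` (and `∅` beyond the range). -/
def nodeView (φ : ℕ) (cfg : Config N R C) (u : ZMod N) (dir : Bool) : ℤ → Set C :=
  fun k => if |k| ≤ (φ : ℤ) then
      colorsAt cfg (u + (if dir then (k : ZMod N) else ((-k : ℤ) : ZMod N)))
    else ∅

/-- Node `u` is a border node: it is occupied, all `φ` nodes on one side are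
empty, and some node within distance `φ` on the other side is occupied. -/
def isBorderNode (φ : ℕ) (cfg : Config N R C) (u : ZMod N) : Prop :=
  occupiedNode cfg u ∧
  ∃ dir : Bool,
    (∀ k : ℤ, 1 ≤ k → k ≤ (φ : ℤ) →
      ¬ occupiedNode cfg (u + (if dir then (k : ZMod N) else ((-k : ℤ) : ZMod N)))) ∧
    (∃ k : ℤ, 1 ≤ k ∧ k ≤ (φ : ℤ) ∧
      occupiedNode cfg (u + (if dir then ((-k : ℤ) : ZMod N) else (k : ZMod N))))

/-- Robot `r` is a border robot. -/
def isBorderRobot (φ : ℕ) (cfg : Config N R C) (r : Fin R) : Prop :=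
  isBorderNode φ cfg (cfg.pos r)

/-- The borders of a configuration: an occupied node together with a direction
in which the next `φ` nodes are all empty (their number is always even). -/
def borderPairs (φ : ℕ) (cfg : Config N R C) : Set (ZMod N × Bool) :=
  {p | occupiedNode cfg p.1 ∧
    ∀ k : ℤ, 1 ≤ k → k ≤ (φ : ℤ) →
      ¬ occupiedNode cfg (p.1 + (if p.2 then (k : ZMod N) else ((-k : ℤ) : ZMod N)))}

/-- Ring distance between two nodes. -/
def ringDist (u v : ZMod N) : ℕ := min (u - v).val (v - u).val

/-- Robots `r` and `r'` can observe each other. -/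
def canSee (φ : ℕ) (cfg : Config N R C) (r r' : Fin R) : Prop :=
  ringDist (cfg.pos r) (cfg.pos r') ≤ φ

/-- The visibility graph of the configuration is connected. -/
def VisConnected (φ : ℕ) (cfg : Config N R C) : Prop :=
  ∀ r r' : Fin R, Relation.ReflTransGen (canSee φ cfg) r r'

/-- The span of a configuration: the least `m` such that all occupied nodes fit
in a window of `m + 1` consecutive nodes.  In a configuration with exactly two
borders this is the distance `D` between the two border nodes. -/
noncomputable def spanDist (cfg : Config N R C) : ℕ :=
  sInf {m : ℕ | ∃ b : ZMod N, ∀ u, occupiedNode cfg u → ∃ i : ℕ, i ≤ m ∧ u = b + (i : ZMod N)}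

/-! ### Algorithms and asynchronous executions -/

/-- A deterministic algorithm for luminous robots in the full-light model:
given the robot's own color and its (oriented) view, output a new color and a
movement (`+1`, `0` or `-1`, relative to the orientation of the view). -/
structure Algo (C : Type) where
  out : C → (ℤ → Set C) → C × SignType

/-- The destination of a movement `m` from node `u`, for view orientation `dir`. -/
def moveTarget (u : ZMod N) (dir : Bool) (m : SignType) : ZMod N :=
  u + (if dir then ((m : ℤ) : ZMod N) else ((-(m : ℤ) : ℤ) : ZMod N))

/-- An execution of algorithm `A` under a fair asynchronous scheduler.
At each instant every robot either stays idle, performs a Look (together with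
the deterministic Compute, recording a plan: a new color and a destination
node; the orientation of the snapshot is chosen adversarially, as robots are
disoriented), becomes visible with its new color (end of the Compute phase,
keeping its pending plan), or performs its atomic Move, completing the cycle.
A robot `r` with `plan t r ≠ none` is a robot whose view may be outdated. -/
structure AsyncExec (N R : ℕ) (C : Type) (φ : ℕ) (A : Algo C) where
  cfg : ℕ → Config N R C
  plan : ℕ → Fin R → Option (C × ZMod N)
  init_plan : ∀ r, plan 0 r = none
  step : ∀ (t : ℕ) (r : Fin R),
      ((cfg (t+1)).pos r = (cfg t).pos r ∧ (cfg (t+1)).light r = (cfg t).light r ∧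
        plan (t+1) r = plan t r)
    ∨ (plan t r = none ∧ (cfg (t+1)).pos r = (cfg t).pos r ∧
        (cfg (t+1)).light r = (cfg t).light r ∧
        ∃ dir : Bool,
          plan (t+1) r =
            some ((A.out ((cfg t).light r) (nodeView φ (cfg t) ((cfg t).pos r) dir)).1,
              moveTarget ((cfg t).pos r) dir
                (A.out ((cfg t).light r) (nodeView φ (cfg t) ((cfg t).pos r) dir)).2))
    ∨ (∃ c u, plan t r = some (c, u) ∧ (cfg (t+1)).pos r = (cfg t).pos r ∧
        (cfg (t+1)).light r = c ∧ plan (t+1) r = some (c, u))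
    ∨ (∃ c u, plan t r = some (c, u) ∧ (cfg (t+1)).pos r = u ∧
        (cfg (t+1)).light r = c ∧ plan (t+1) r = none)
  fair : ∀ (r : Fin R) (t : ℕ), ∃ t', t ≤ t' ∧ plan t' r ≠ none ∧ plan (t'+1) r = none

/-- The execution achieves gathering: from some time on, all robots occupy a
single node and remain there forever. -/
def AchievesGathering {N R : ℕ} {C : Type} {φ : ℕ} {A : Algo C}
    (e : AsyncExec N R C φ A) : Prop :=
  ∃ (t : ℕ) (u : ZMod N), ∀ t', t ≤ t' → ∀ r, (e.cfg t').pos r = u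

/-! ### Initial configurations -/

/-- The robots occupy a segment `G'` of `Minit` nodes with base (border) node
`b`: both endpoints of the segment are occupied and are borders (the `φ` nodes
beyond each endpoint are empty), every occupied node lies in the segment,
consecutive occupied nodes are at distance at most `φ` (`H_init ≤ φ`, i.e. the
visibility graph is connected), and `Oinit` is the number of occupied nodes of
the segment. -/
def SegmentInitOn (φ : ℕ) (cfg : Config N R C) (b : ZMod N) (Minit Oinit : ℕ) : Prop :=
  2 ≤ Minit ∧
  occupiedNode cfg b ∧ occupiedNode cfg (b + ((Minit - 1 : ℕ) : ZMod N)) ∧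
  (∀ u, occupiedNode cfg u → ∃ i : ℕ, i < Minit ∧ u = b + (i : ZMod N)) ∧
  (∀ k : ℕ, 1 ≤ k → k ≤ φ →
    ¬ occupiedNode cfg (b - (k : ZMod N)) ∧
    ¬ occupiedNode cfg (b + ((Minit - 1 : ℕ) : ZMod N) + (k : ZMod N))) ∧
  (∀ i : ℕ, i + 1 < Minit → occupiedNode cfg (b + (i : ZMod N)) →
    ∃ j : ℕ, i < j ∧ j ≤ i + φ ∧ j < Minit ∧ occupiedNode cfg (b + (j : ZMod N))) ∧
  Oinit = {i : Fin Minit | occupiedNode cfg (b + ((i : ℕ) : ZMod N))}.ncard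

/-- Admissible initial configuration: all robots have the color `white`, and
the robots occupy a segment with two borders and connected visibility graph. -/
def AdmissibleInit (φ : ℕ) (cfg : Config N R C) (white : C) (Minit Oinit : ℕ) : Prop :=
  (∀ r, cfg.light r = white) ∧ ∃ b : ZMod N, SegmentInitOn φ cfg b Minit Oinit

/-! ### Edge-view symmetry and cautiousness -/

/-- Robots `r1` and `r2` are indistinguishable: they have the same color and
the same view (up to reversal, as robots are disoriented). -/
def viewsEq (φ : ℕ) (cfg : Config N R C) (r1 r2 : Fin R) : Prop :=
  cfg.light r1 = cfg.light r2 ∧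
  (nodeView φ cfg (cfg.pos r1) true = nodeView φ cfg (cfg.pos r2) true ∨
   nodeView φ cfg (cfg.pos r1) true = nodeView φ cfg (cfg.pos r2) false)

/-- Definition 20: a configuration is edge-view-symmetric if at least two
distinct nodes host robots and there is an edge `(u_i, u_{i+1})` such that for
every `k ≥ 0`, every robot at `u_{i-k}` has an indistinguishable counterpart at
`u_{i+k+1}`. -/
def EdgeViewSymmetric (φ : ℕ) (cfg : Config N R C) : Prop :=
  (∃ u v : ZMod N, u ≠ v ∧ occupiedNode cfg u ∧ occupiedNode cfg v) ∧
  ∃ i : ZMod N, ∀ (k : ℕ) (r1 : Fin R), cfg.pos r1 = i - (k : ZMod N) →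
    ∃ r2 : Fin R, cfg.pos r2 = i + (k : ZMod N) + 1 ∧ viewsEq φ cfg r1 r2

/-- Definition 23: an algorithm is cautious if robots only ever move toward
other occupied nodes (they never expand the span of the visibility graph). -/
def Cautious (φ : ℕ) (A : Algo C) : Prop :=
  ∀ (c : C) (v : ℤ → Set C),
    ((A.out c v).2 = 1 → ∃ k : ℤ, 1 ≤ k ∧ k ≤ (φ : ℤ) ∧ v k ≠ ∅) ∧
    ((A.out c v).2 = -1 → ∃ k : ℤ, 1 ≤ k ∧ k ≤ (φ : ℤ) ∧ v (-k) ≠ ∅)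

end Gathering

namespace Gathering

/-! ### Algorithm 1 (three colors) -/

/-- The three light colors of Algorithm 1. -/
inductive C3 : Type
  | White
  | Red
  | Blue
deriving DecidableEq

open Classical in
/-- The rules of Algorithm 1, for a view oriented so that the `φ` nodes at
negative offsets are empty (the observing robot is a border robot and the
positive direction points inward), in priority order
R1, R2a, R2b, R3a, R3b, R4a, R4b, R5. -/
noncomputable def algo1Rules (φ : ℕ) (c : C3) (v : ℤ → Set C3) : C3 × SignType :=
  -- R1 : ∅^φ [W!] (¬∅^φ)  ::  R
  if c = C3.White ∧ v 0 = {C3.White} then (C3.Red, 0)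
  -- R2a : ∅^φ [R!] (∅, B!) (¬(∅^(φ-1)))  ::  B, →
  else if c = C3.Red ∧ v 0 = {C3.Red} ∧ (v 1 = ∅ ∨ v 1 = {C3.Blue}) ∧
      ¬ (∀ k : ℤ, 2 ≤ k → k ≤ (φ : ℤ) → v k = ∅) then (C3.Blue, 1)
  -- R2b : ∅^φ [R!] (W) (?^(φ-1))  ::  B, →
  else if c = C3.Red ∧ v 0 = {C3.Red} ∧ C3.White ∈ v 1 ∧
      (∀ k : ℤ, 2 ≤ k → k ≤ (φ : ℤ) → v k ≠ ∅) then (C3.Blue, 1)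
  -- R3a : ∅^φ [B!] (∅, R!) (¬(∅^(φ-1)))  ::  R, →
  else if c = C3.Blue ∧ v 0 = {C3.Blue} ∧ (v 1 = ∅ ∨ v 1 = {C3.Red}) ∧
      ¬ (∀ k : ℤ, 2 ≤ k → k ≤ (φ : ℤ) → v k = ∅) then (C3.Red, 1)
  -- R3b : ∅^φ [B!] (W) (?^(φ-1))  ::  R, →
  else if c = C3.Blue ∧ v 0 = {C3.Blue} ∧ C3.White ∈ v 1 ∧
      (∀ k : ℤ, 2 ≤ k → k ≤ (φ : ℤ) → v k ≠ ∅) then (C3.Red, 1)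
  -- R4a : ∅^φ [R [W]] (¬∅^φ)  ::  R
  else if c = C3.White ∧ C3.Red ∈ v 0 then (C3.Red, 0)
  -- R4b : ∅^φ [B [W]] (¬∅^φ)  ::  B
  else if c = C3.White ∧ C3.Blue ∈ v 0 then (C3.Blue, 0)
  -- R5 : ∅^φ [R!] (B!) (∅^(φ-1))  ::  B, →
  else if c = C3.Red ∧ v 0 = {C3.Red} ∧ v 1 = {C3.Blue} ∧
      (∀ k : ℤ, 2 ≤ k → k ≤ (φ : ℤ) → v k = ∅) then (C3.Blue, 1)
  else (c, 0)

open Classical in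
/-- Algorithm 1: the rules are applied in the orientation in which the `φ`
nearest nodes on one side are all empty.  A robot seeing no other robot does
nothing (rule R0), and no rule is enabled for a non-border robot. -/
noncomputable def algo1 (φ : ℕ) : Algo C3 where
  out := fun c v =>
    if (∀ k : ℤ, 1 ≤ k → k ≤ (φ : ℤ) → v (-k) = ∅) ∧
       (∀ k : ℤ, 1 ≤ k → k ≤ (φ : ℤ) → v k = ∅) then (c, 0)
    else if ∀ k : ℤ, 1 ≤ k → k ≤ (φ : ℤ) → v (-k) = ∅ then algo1Rules φ c v
    else if ∀ k : ℤ, 1 ≤ k → k ≤ (φ : ℤ) → v k = ∅ then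
      ((algo1Rules φ c (fun k => v (-k))).1, -(algo1Rules φ c (fun k => v (-k))).2)
    else (c, 0)

/-! ### Algorithm 2 (four colors) -/

/-- The four light colors of Algorithm 2. -/
inductive C4 : Type
  | White
  | Red
  | Blue
  | Purple
deriving DecidableEq

open Classical in
/-- The rules of Algorithm 2, for a view oriented so that the `φ` nodes at
negative offsets are empty, in priority order
R1, R2a-1, R2a-2, R2b, R3a-1, R3a-2, R3b, R4a, R4b, R5a, R5b-1, R5b-2, R5b-3. -/
noncomputable def algo2Rules (φ : ℕ) (c : C4) (v : ℤ → Set C4) : C4 × SignType :=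
  -- R1 : ∅^φ [W!] (¬∅^φ)  ::  R
  if c = C4.White ∧ v 0 = {C4.White} then (C4.Red, 0)
  -- R2a-1 : ∅^φ [R!] (∅) (¬(∅^(φ-1)))  ::  →
  else if c = C4.Red ∧ v 0 = {C4.Red} ∧ v 1 = ∅ ∧
      ¬ (∀ k : ℤ, 2 ≤ k → k ≤ (φ : ℤ) → v k = ∅) then (C4.Red, 1)
  -- R2a-2 : ∅^φ [R!] (¬W, R) (¬(∅^(φ-1)))  ::  →
  else if c = C4.Red ∧ v 0 = {C4.Red} ∧ (C4.Red ∈ v 1 ∧ C4.White ∉ v 1) ∧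
      ¬ (∀ k : ℤ, 2 ≤ k → k ≤ (φ : ℤ) → v k = ∅) then (C4.Red, 1)
  -- R2b : ∅^φ [R!] (W) (?^(φ-1))  ::  B, →
  else if c = C4.Red ∧ v 0 = {C4.Red} ∧ C4.White ∈ v 1 ∧
      (∀ k : ℤ, 2 ≤ k → k ≤ (φ : ℤ) → v k ≠ ∅) then (C4.Blue, 1)
  -- R3a-1 : ∅^φ [B!] (∅) (¬(∅^(φ-1)))  ::  →
  else if c = C4.Blue ∧ v 0 = {C4.Blue} ∧ v 1 = ∅ ∧
      ¬ (∀ k : ℤ, 2 ≤ k → k ≤ (φ : ℤ) → v k = ∅) then (C4.Blue, 1)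
  -- R3a-2 : ∅^φ [B!] (¬W, B) (¬(∅^(φ-1)))  ::  →
  else if c = C4.Blue ∧ v 0 = {C4.Blue} ∧ (C4.Blue ∈ v 1 ∧ C4.White ∉ v 1) ∧
      ¬ (∀ k : ℤ, 2 ≤ k → k ≤ (φ : ℤ) → v k = ∅) then (C4.Blue, 1)
  -- R3b : ∅^φ [B!] (W) (?^(φ-1))  ::  R, →
  else if c = C4.Blue ∧ v 0 = {C4.Blue} ∧ C4.White ∈ v 1 ∧
      (∀ k : ℤ, 2 ≤ k → k ≤ (φ : ℤ) → v k ≠ ∅) then (C4.Red, 1)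
  -- R4a : ∅^φ [R [W]] (¬∅^φ)  ::  R
  else if c = C4.White ∧ C4.Red ∈ v 0 then (C4.Red, 0)
  -- R4b : ∅^φ [B [W]] (¬∅^φ)  ::  B
  else if c = C4.White ∧ C4.Blue ∈ v 0 then (C4.Blue, 0)
  -- R5a : ∅^φ [?] (P) (∅^(φ-1))  ::  →
  else if C4.Purple ∈ v 1 ∧ (∀ k : ℤ, 2 ≤ k → k ≤ (φ : ℤ) → v k = ∅) then (c, 1)
  -- R5b-1 : ∅^φ [B!] (R!) (∅^(φ-1))  ::  P
  else if c = C4.Blue ∧ v 0 = {C4.Blue} ∧ v 1 = {C4.Red} ∧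
      (∀ k : ℤ, 2 ≤ k → k ≤ (φ : ℤ) → v k = ∅) then (C4.Purple, 0)
  -- R5b-2 : ∅^φ [B!] (R, B) (∅^(φ-1))  ::  P
  else if c = C4.Blue ∧ v 0 = {C4.Blue} ∧ (C4.Red ∈ v 1 ∧ C4.Blue ∈ v 1) ∧
      (∀ k : ℤ, 2 ≤ k → k ≤ (φ : ℤ) → v k = ∅) then (C4.Purple, 0)
  -- R5b-3 : ∅^φ [R [B]] (R!) (∅^(φ-1))  ::  P
  else if c = C4.Blue ∧ C4.Red ∈ v 0 ∧ v 1 = {C4.Red} ∧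
      (∀ k : ℤ, 2 ≤ k → k ≤ (φ : ℤ) → v k = ∅) then (C4.Purple, 0)
  else (c, 0)

open Classical in
/-- Algorithm 2: the rules are applied in the orientation in which the `φ`
nearest nodes on one side are all empty.  A robot seeing no other robot does
nothing (rule R0), and no rule is enabled for a non-border robot. -/
noncomputable def algo2 (φ : ℕ) : Algo C4 where
  out := fun c v =>
    if (∀ k : ℤ, 1 ≤ k → k ≤ (φ : ℤ) → v (-k) = ∅) ∧
       (∀ k : ℤ, 1 ≤ k → k ≤ (φ : ℤ) → v k = ∅) then (c, 0)
    else if ∀ k : ℤ, 1 ≤ k → k ≤ (φ : ℤ) → v (-k) = ∅ then algo2Rules φ c v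
    else if ∀ k : ℤ, 1 ≤ k → k ≤ (φ : ℤ) → v k = ∅ then
      ((algo2Rules φ c (fun k => v (-k))).1, -(algo2Rules φ c (fun k => v (-k))).2)
    else (c, 0)

/-- `#O_W`: the number of nodes hosting a White robot that are not border
nodes. -/
noncomputable def numWhiteNonBorder {N R : ℕ} (φ : ℕ) (cfg : Config N R C4) : ℕ :=
  {u : ZMod N | C4.White ∈ colorsAt cfg u ∧ ¬ isBorderNode φ cfg u}.ncard

end Gathering


namespace Gathering
namespace Cor22

variable {N R : ℕ} {C : Type}

/-- Mirror symmetry of a configuration: `ρ` pairs each robot with a robot at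
the mirror node (reflection `x ↦ m - x`) carrying the same light. -/
def Sym (m : ZMod N) (ρ : Fin R → Fin R) (cfg : Config N R C) : Prop :=
  (∀ r, cfg.pos (ρ r) = m - cfg.pos r) ∧ (∀ r, cfg.light (ρ r) = cfg.light r)

lemma colorsAt_symm {m : ZMod N} {ρ : Fin R → Fin R} {cfg : Config N R C}
    (hs : Sym m ρ cfg) (u : ZMod N) : colorsAt cfg (m - u) = colorsAt cfg u := by
  ext c
  constructor
  · rintro ⟨r, hr, hc⟩
    exact ⟨ρ r, by rw [hs.1, hr]; ring, by rw [hs.2, hc]⟩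
  · rintro ⟨r, hr, hc⟩
    exact ⟨ρ r, by rw [hs.1, hr], by rw [hs.2, hc]⟩

lemma nodeView_symm (φ : ℕ) {m : ZMod N} {ρ : Fin R → Fin R} {cfg : Config N R C}
    (hs : Sym m ρ cfg) (u : ZMod N) :
    nodeView φ cfg (m - u) false = nodeView φ cfg u true := by
  funext k
  unfold nodeView
  split
  · simp only [Bool.false_eq_true, if_false, if_true]
    have h1 : m - u + ((-k : ℤ) : ZMod N) = m - (u + ((k : ℤ) : ZMod N)) := by
      push_cast; ring
    rw [h1, colorsAt_symm hs]
  · rfl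

lemma moveTarget_symm (m u : ZMod N) (d : Bool) (s : SignType) :
    moveTarget (m - u) (!d) s = m - moveTarget u d s := by
  cases d <;> simp only [moveTarget, Bool.not_false, Bool.not_true, Bool.false_eq_true,
    if_false, if_true] <;> push_cast <;> ring

/-- The adversarial orientation: robots in the left half look "forward". -/
def dirOf (h : ℕ) (r : Fin R) : Bool := decide (r.val < h)

/-- The plan (new color and movement) computed by robot `r`. -/
def planOf (φ h : ℕ) (A : Algo C) (cfg : Config N R C) (r : Fin R) : C × SignType :=
  A.out (cfg.light r) (nodeView φ cfg (cfg.pos r) (dirOf h r))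

/-- One fully synchronous round. -/
def nextCfg (φ h : ℕ) (A : Algo C) (cfg : Config N R C) : Config N R C where
  pos := fun r => moveTarget (cfg.pos r) (dirOf h r) (planOf φ h A cfg r).2
  light := fun r => (planOf φ h A cfg r).1

lemma planOf_symm (φ h : ℕ) (A : Algo C) {m : ZMod N} {ρ : Fin R → Fin R}
    {cfg : Config N R C} (hs : Sym m ρ cfg)
    (hside : ∀ r, dirOf h (ρ r) = ! dirOf h r) (r : Fin R) :
    planOf φ h A cfg (ρ r) = planOf φ h A cfg r := by
  unfold planOf
  rw [hs.2, hs.1, hside]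
  congr 1
  cases hd : dirOf h r
  · have h2 := nodeView_symm (cfg := cfg) φ hs (m - cfg.pos r)
    rw [show m - (m - cfg.pos r) = cfg.pos r by ring] at h2
    simpa using h2.symm
  · simpa using nodeView_symm (cfg := cfg) φ hs (cfg.pos r)

lemma sym_next (φ h : ℕ) (A : Algo C) {m : ZMod N} {ρ : Fin R → Fin R}
    (hside : ∀ r, dirOf h (ρ r) = ! dirOf h r)
    {cfg : Config N R C} (hs : Sym m ρ cfg) : Sym m ρ (nextCfg φ h A cfg) := by
  constructor
  · intro r
    show moveTarget (cfg.pos (ρ r)) (dirOf h (ρ r)) (planOf φ h A cfg (ρ r)).2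
        = m - moveTarget (cfg.pos r) (dirOf h r) (planOf φ h A cfg r).2
    rw [planOf_symm φ h A hs hside, hs.1, hside, moveTarget_symm]
  · intro r
    show (planOf φ h A cfg (ρ r)).1 = (planOf φ h A cfg r).1
    rw [planOf_symm φ h A hs hside]

/-- Positions of the robots: the first `hh` robots occupy the first `hh`
nodes of the segment, the last `hh` robots the last `hh` nodes. -/
def xpos (M O hh : ℕ) (r : Fin O) : ℕ := if r.val < hh then r.val else M - O + r.val

/-- The mirror pairing of the robots. -/
def mir (O : ℕ) (r : Fin O) : Fin O := ⟨O - 1 - r.val, by have := r.2; omega⟩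

/-- The initial configuration. -/
def cfgInit (N M O hh : ℕ) {C : Type} (c0 : C) : Config N O C :=
  ⟨fun r => ((xpos M O hh r : ℕ) : ZMod N), fun _ => c0⟩

end Cor22
end Gathering


namespace Gathering

/-- **Corollary 22.** For every even `M_init` and even `O_init` there exists
an initial configuration with those parameters in which all robots have the
same color (namely an edge-view-symmetric one) from which no deterministic
algorithm achieves gathering. -/
theorem even_even_monochromatic_impossible
    (C : Type) (c0 : C) (Minit Oinit : ℕ)
    (hM : Even Minit) (hO : Even Oinit) (hO2 : 2 ≤ Oinit) (hOM : Oinit ≤ Minit) :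
    ∃ (N R phi : ℕ), 3 ≤ N ∧ 1 ≤ phi ∧
      ∃ cfg0 : Config N R C,
        AdmissibleInit phi cfg0 c0 Minit Oinit ∧
        EdgeViewSymmetric phi cfg0 ∧
        ∀ A : Algo C, ∃ e : AsyncExec N R C phi A,
          e.cfg 0 = cfg0 ∧ ¬ AchievesGathering e := by
  classical
  obtain ⟨hh, hOeq⟩ := hO
  obtain ⟨mh, hMeq⟩ := hM
  refine ⟨3 * Minit, Oinit, Minit, by omega, by omega, ?_⟩
  haveI : NeZero (3 * Minit) := ⟨by omega⟩
  -- basic notation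
  set cfg0 : Config (3 * Minit) Oinit C := Cor22.cfgInit (3 * Minit) Minit Oinit hh c0
    with hcfg0
  set m : ZMod (3 * Minit) := ((Minit - 1 : ℕ) : ZMod (3 * Minit)) with hm
  -- arithmetic facts about cast injectivity
  have hcastinj : ∀ a b : ℕ, a < 3 * Minit → b < 3 * Minit →
      ((a : ℕ) : ZMod (3 * Minit)) = ((b : ℕ) : ZMod (3 * Minit)) → a = b := by
    intro a b ha hb hab
    have := congrArg ZMod.val hab
    rwa [ZMod.val_natCast_of_lt ha, ZMod.val_natCast_of_lt hb] at this
  have hdvd : ∀ a : ℕ, ((a : ℕ) : ZMod (3 * Minit)) = 0 → 3 * Minit ∣ a := by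
    intro a ha
    exact (ZMod.natCast_eq_zero_iff a _).1 ha
  -- facts about positions
  have hxlt : ∀ r : Fin Oinit, Cor22.xpos Minit Oinit hh r < Minit := by
    intro r
    have := r.2
    simp only [Cor22.xpos]
    split <;> omega
  have hpos : ∀ r : Fin Oinit,
      cfg0.pos r = ((Cor22.xpos Minit Oinit hh r : ℕ) : ZMod (3 * Minit)) := fun r => rfl
  have hlight : ∀ r : Fin Oinit, cfg0.light r = c0 := fun r => rfl
  have hxsum : ∀ r : Fin Oinit,
      Cor22.xpos Minit Oinit hh (Cor22.mir Oinit r) + Cor22.xpos Minit Oinit hh r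
        = Minit - 1 := by
    intro r
    have := r.2
    simp only [Cor22.xpos, Cor22.mir]
    by_cases h1 : (r : ℕ) < hh <;> by_cases h2 : Oinit - 1 - (r : ℕ) < hh <;>
      simp only [h1, h2, ↓reduceIte] <;> omega
  -- the mirror symmetry of cfg0
  have hsym0 : Cor22.Sym m (Cor22.mir Oinit) cfg0 := by
    constructor
    · intro r
      rw [hpos, hpos, hm]
      have hc := congrArg (fun n : ℕ => ((n : ℕ) : ZMod (3 * Minit))) (hxsum r)
      simp only [Nat.cast_add] at hc
      linear_combination hc
    · intro r
      rfl
  -- occupancy of the two endpoints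
  have hOcc0 : occupiedNode cfg0 (0 : ZMod (3 * Minit)) := by
    refine ⟨⟨0, by omega⟩, ?_⟩
    rw [hpos]
    have : Cor22.xpos Minit Oinit hh ⟨0, by omega⟩ = 0 := by
      simp only [Cor22.xpos]
      rw [if_pos (by omega : (0 : ℕ) < hh)]
    rw [this, Nat.cast_zero]
  have hOccLast : occupiedNode cfg0 (((Minit - 1 : ℕ) : ZMod (3 * Minit))) := by
    refine ⟨⟨Oinit - 1, by omega⟩, ?_⟩
    rw [hpos]
    congr 1
    simp only [Cor22.xpos]
    rw [if_neg (by omega : ¬ (Oinit - 1 < hh))]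
    omega
  -- side-flip of the mirror pairing
  have hside : ∀ r : Fin Oinit,
      Cor22.dirOf hh (Cor22.mir Oinit r) = ! Cor22.dirOf hh r := by
    intro r
    have := r.2
    show decide (Oinit - 1 - r.val < hh) = ! decide (r.val < hh)
    rw [← decide_not, decide_eq_decide]
    omega
  -- no fixed point of the mirror reflection
  have hnofix : ∀ u : ZMod (3 * Minit), m - u ≠ u := by
    intro u he
    have h2 : m = u + u := by linear_combination he
    have hdv : (2 : ℕ) ∣ 3 * Minit := by omega
    have h3 := congrArg (ZMod.castHom hdv (ZMod 2)) h2
    rw [map_add, hm, map_natCast] at h3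
    have hm2 : ((Minit - 1 : ℕ) : ZMod 2) = 1 := by
      have h4 : Minit - 1 = 2 * (mh - 1) + 1 := by omega
      rw [h4]
      push_cast
      rw [show (2 : ZMod 2) = 0 by decide]
      ring
    rw [hm2] at h3
    have hz : ∀ a : ZMod 2, a + a = 0 := by decide
    rw [hz] at h3
    exact one_ne_zero h3
  refine ⟨cfg0, ⟨fun r => rfl, 0, ?_, hOcc0, ?_, ?_, ?_, ?_, ?_⟩, ?_, ?_⟩
  -- 2 ≤ Minit
  · omega
  -- second endpoint occupied
  · rw [zero_add]
    exact hOccLast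
  -- all occupied nodes in the segment
  · rintro u ⟨r, hr⟩
    exact ⟨Cor22.xpos Minit Oinit hh r, hxlt r, by rw [← hr, hpos, zero_add]⟩
  -- the two borders
  · intro k hk1 hk2
    constructor
    · rintro ⟨r, hr⟩
      rw [hpos] at hr
      have hz : ((Cor22.xpos Minit Oinit hh r + k : ℕ) : ZMod (3 * Minit)) = 0 := by
        push_cast
        linear_combination hr
      have := Nat.le_of_dvd (by omega) (hdvd _ hz)
      have := hxlt r
      omega
    · rintro ⟨r, hr⟩
      rw [hpos, zero_add] at hr
      have hc : (((Minit - 1) + k : ℕ) : ZMod (3 * Minit))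
          = ((Cor22.xpos Minit Oinit hh r : ℕ) : ZMod (3 * Minit)) := by
        push_cast
        linear_combination hr.symm
      have := hcastinj _ _ (by omega) (by have := hxlt r; omega) hc
      have := hxlt r
      omega
  -- connectivity of the visibility graph
  · intro i hi _
    refine ⟨Minit - 1, by omega, by omega, by omega, ?_⟩
    rw [zero_add]
    exact hOccLast
  -- the number of occupied nodes
  · have hfinj : Function.Injective
        (fun r : Fin Oinit => (⟨Cor22.xpos Minit Oinit hh r, hxlt r⟩ : Fin Minit)) := by
      intro r s hrs
      have h1 := r.2
      have h2 := s.2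
      have h3 : Cor22.xpos Minit Oinit hh r = Cor22.xpos Minit Oinit hh s :=
        congrArg Fin.val hrs
      apply Fin.ext
      simp only [Cor22.xpos] at h3
      split_ifs at h3 <;> omega
    have hsetEq : {i : Fin Minit |
          occupiedNode cfg0 ((0 : ZMod (3 * Minit)) + ((i : ℕ) : ZMod (3 * Minit)))}
        = Set.range (fun r : Fin Oinit =>
            (⟨Cor22.xpos Minit Oinit hh r, hxlt r⟩ : Fin Minit)) := by
      ext i
      simp only [Set.mem_setOf_eq, Set.mem_range]
      constructor
      · rintro ⟨r, hr⟩
        refine ⟨r, Fin.ext ?_⟩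
        show Cor22.xpos Minit Oinit hh r = (i : ℕ)
        rw [hpos, zero_add] at hr
        exact hcastinj _ _ (by have := hxlt r; omega) (by have := i.2; omega) hr
      · rintro ⟨r, rfl⟩
        exact ⟨r, by rw [hpos, zero_add]⟩
    rw [hsetEq, ← Set.image_univ, Set.ncard_image_of_injective _ hfinj, Set.ncard_univ,
      Nat.card_eq_fintype_card, Fintype.card_fin]
  -- edge-view symmetry
  · constructor
    · refine ⟨0, ((Minit - 1 : ℕ) : ZMod (3 * Minit)), ?_, hOcc0, hOccLast⟩
      intro he
      have := hcastinj 0 (Minit - 1) (by omega) (by omega)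
        (by rw [Nat.cast_zero]; exact he)
      omega
    · refine ⟨((Minit / 2 - 1 : ℕ) : ZMod (3 * Minit)), ?_⟩
      intro k r1 hr1
      have hm2i : m = ((Minit / 2 - 1 : ℕ) : ZMod (3 * Minit))
          + ((Minit / 2 - 1 : ℕ) : ZMod (3 * Minit)) + 1 := by
        rw [hm, show (Minit - 1 : ℕ) = (Minit / 2 - 1) + ((Minit / 2 - 1) + 1) by omega]
        push_cast
        ring
      refine ⟨Cor22.mir Oinit r1, ?_, ?_, Or.inr ?_⟩
      · rw [hsym0.1 r1, hr1, hm2i]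
        ring
      · rfl
      · rw [hsym0.1 r1]
        exact (Cor22.nodeView_symm Minit hsym0 _).symm
  -- the adversarial execution
  · intro A
    set stepF := Cor22.nextCfg Minit hh A with hstepF
    set cfgs : ℕ → Config (3 * Minit) Oinit C := fun s => stepF^[s] cfg0 with hcfgs
    have hsucc : ∀ s, cfgs (s + 1) = stepF (cfgs s) := by
      intro s
      rw [hcfgs]
      exact Function.iterate_succ_apply' stepF s cfg0
    have hsym : ∀ s, Cor22.Sym m (Cor22.mir Oinit) (cfgs s) := by
      intro s
      induction s with
      | zero => exact hsym0
      | succ n ih =>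
        rw [hsucc n]
        exact Cor22.sym_next _ _ _ hside ih
    refine ⟨{
      cfg := fun t => cfgs (t / 2)
      plan := fun t r => if t % 2 = 1 then
          some ((Cor22.planOf Minit hh A (cfgs (t / 2)) r).1,
            moveTarget ((cfgs (t / 2)).pos r) (Cor22.dirOf hh r)
              (Cor22.planOf Minit hh A (cfgs (t / 2)) r).2)
        else none
      init_plan := fun r => by norm_num
      step := ?_
      fair := ?_ }, ?_, ?_⟩
    · intro t r
      rcases Nat.even_or_odd t with ⟨s, hs⟩ | ⟨s, hs⟩
      · subst hs
        right; left
        have e1 : (s + s) % 2 = 0 := by omega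
        have e2 : (s + s) / 2 = s := by omega
        have e3 : (s + s + 1) % 2 = 1 := by omega
        have e4 : (s + s + 1) / 2 = s := by omega
        refine ⟨by simp only [e1]; norm_num, by simp only [e2, e4], by simp only [e2, e4],
          Cor22.dirOf hh r, ?_⟩
        simp only [e2, e3, e4]
        norm_num
        exact ⟨rfl, rfl⟩
      · subst hs
        right; right; right
        have e2 : (2 * s + 1) / 2 = s := by omega
        have e3 : (2 * s + 1) % 2 = 1 := by omega
        have e4 : (2 * s + 1 + 1) / 2 = s + 1 := by omega
        have e5 : (2 * s + 1 + 1) % 2 = 0 := by omega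
        refine ⟨(Cor22.planOf Minit hh A (cfgs s) r).1,
          moveTarget ((cfgs s).pos r) (Cor22.dirOf hh r)
            (Cor22.planOf Minit hh A (cfgs s) r).2,
          by simp only [e2, e3]; norm_num, ?_, ?_, by simp only [e5]; norm_num⟩
        · show (cfgs ((2 * s + 1 + 1) / 2)).pos r = _
          rw [e4, hsucc]
          rfl
        · show (cfgs ((2 * s + 1 + 1) / 2)).light r = _
          rw [e4, hsucc]
          rfl
    · intro r t
      refine ⟨2 * (t / 2) + 1, by omega, ?_, ?_⟩
      · have e : (2 * (t / 2) + 1) % 2 = 1 := by omega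
        simp only [e]
        simp
      · have e : (2 * (t / 2) + 1 + 1) % 2 = 0 := by omega
        simp only [e]
        norm_num
    · show cfgs (0 / 2) = cfg0
      rw [Nat.zero_div, hcfgs]
      rfl
    · rintro ⟨t, u, hg⟩
      have h1 := hg t le_rfl ⟨0, by omega⟩
      have h2 := hg t le_rfl (Cor22.mir Oinit ⟨0, by omega⟩)
      have h3 := (hsym (t / 2)).1 ⟨0, by omega⟩
      rw [h1, h2] at h3
      exact hnofix u h3.symm


end Gathering
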